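/- arXiv:2310.05540 — 2 statements merged into one kernel-verified Lean document; each statement's English description precedes it below -/
import Mathlib

section
/- Let A = x^a(x+1)^b(x+α)^c(x+α+1)^d ∈ F_4[x] be bi-unitary perfect. If a is even and b is odd, then a ∈ {2,4,6} and b ≤ 11; symmetrically, if a is odd and b is even then a ≤ 11 and b ∈ {2,4,6}; if c is even and d is odd then c ∈ {2,4,6} and d ≤ 11; if c is odd and d is even then c ≤ 11 and d ∈ {2,4,6}. -/
open Polynomial

variable {F : Type*} [Field F]

/-- `D` is a (monic) unitary divisor of `S`: `D ∣ S` and `gcd(D, S/D) = 1`. -/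
def IsUnitaryDivisor (D S : Polynomial F) : Prop :=
  D.Monic ∧ D ∣ S ∧ IsCoprime D (S / D)

/-- `D` is a (monic) bi-unitary divisor of `S`: `gcd_u(D, S/D) = 1`, i.e. the only common
monic unitary divisor of `D` and `S/D` is `1`. -/
def IsBiunitaryDivisor (D S : Polynomial F) : Prop :=
  D.Monic ∧ D ∣ S ∧
    ∀ G : Polynomial F, IsUnitaryDivisor G D → IsUnitaryDivisor G (S / D) → G = 1

/-- `σ(S)`: the sum of all monic divisors of `S`. -/
noncomputable def sigma' (S : Polynomial F) : Polynomial F :=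
  ∑ᶠ D ∈ {D : Polynomial F | D.Monic ∧ D ∣ S}, D

/-- `σ**(S)`: the sum of all monic bi-unitary divisors of `S`. -/
noncomputable def sigmaStarStar (S : Polynomial F) : Polynomial F :=
  ∑ᶠ D ∈ {D : Polynomial F | IsBiunitaryDivisor D S}, D

/-- `S` is bi-unitary perfect: `σ**(S) = S`. -/
def IsBUP (S : Polynomial F) : Prop := sigmaStarStar S = S

/-- The field with four elements. -/
abbrev F4 := GaloisField 2 2

open Finset

noncomputable instance : Fintype F4 := Fintype.ofFinite _
noncomputable instance : DecidableEq F4 := Classical.decEq _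

noncomputable def pl (γ : F4) : Polynomial F4 := X - C γ

lemma pl_monic (γ : F4) : (pl γ).Monic := monic_X_sub_C γ
lemma pl_ne_zero (γ : F4) : pl γ ≠ 0 := (pl_monic γ).ne_zero
lemma pl_roots (γ : F4) : (pl γ).roots = {γ} := roots_X_sub_C γ
lemma pl_splits (γ : F4) : (pl γ).Splits := Splits.X_sub_C _

noncomputable def Sb (e : F4 → ℕ) : Polynomial F4 := ∏ γ : F4, pl γ ^ e γ

lemma Sb_monic (e : F4 → ℕ) : (Sb e).Monic :=
  monic_prod_of_monic _ _ fun γ _ => (pl_monic γ).pow _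
lemma Sb_ne_zero (e : F4 → ℕ) : Sb e ≠ 0 := (Sb_monic e).ne_zero
lemma Sb_splits (e : F4 → ℕ) : (Sb e).Splits :=
  Splits.prod fun γ _ => (pl_splits γ).pow _

lemma Sb_roots (e : F4 → ℕ) : (Sb e).roots = ∑ γ : F4, e γ • {γ} := by
  rw [Sb, roots_prod _ _ (by exact (Sb_ne_zero e))]
  simp only [roots_pow, pl_roots]
  rw [Finset.sum]
  rw [Multiset.bind, Multiset.join]

lemma rm_Sb (e : F4 → ℕ) (γ : F4) : rootMultiplicity γ (Sb e) = e γ := by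
  rw [← count_roots, Sb_roots]
  simp [Multiset.count_sum', Multiset.count_singleton]

lemma rm_le_of_dvd {D E : Polynomial F4} (hE : E ≠ 0) (h : D ∣ E) (γ : F4) :
    rootMultiplicity γ D ≤ rootMultiplicity γ E := by
  rw [← count_roots, ← count_roots]
  exact Multiset.count_le_of_le γ (roots.le_of_dvd hE h)

lemma eq_prod_rm {D : Polynomial F4} (hm : D.Monic) (hs : D.Splits) :
    D = ∏ γ : F4, pl γ ^ rootMultiplicity γ D := by
  conv_lhs => rw [hs.eq_prod_roots_of_monic hm]
  have h2 : D.roots = (Sb fun γ => rootMultiplicity γ D).roots :=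
    Multiset.ext.mpr fun a => by rw [count_roots, count_roots, rm_Sb]
  have h3 := (Sb_splits _).eq_prod_roots_of_monic (Sb_monic fun γ => rootMultiplicity γ D)
  rw [h2, ← h3, Sb]

lemma pl_coprime {γ δ : F4} (h : γ ≠ δ) : IsCoprime (pl γ) (pl δ) :=
  isCoprime_X_sub_C_of_isUnit_sub (by
    have : γ - δ ≠ 0 := sub_ne_zero.mpr h
    exact (isUnit_iff_ne_zero.mpr (by simpa using fun hh => h (by linear_combination hh))))

lemma pl_not_unit (γ : F4) : ¬ IsUnit (pl γ) := not_isUnit_X_sub_C γ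

lemma pl_prime (γ : F4) : Prime (pl γ) := prime_X_sub_C γ

lemma prod_dvd {e f : F4 → ℕ} (h : ∀ γ, f γ ≤ e γ) : Sb f ∣ Sb e :=
  Finset.prod_dvd_prod_of_dvd _ _ fun γ _ => pow_dvd_pow _ (h γ)

lemma Sb_inj {e f : F4 → ℕ} (h : Sb e = Sb f) : e = f := funext fun γ => by
  rw [← rm_Sb e γ, h, rm_Sb]

lemma Sb_zero : Sb (fun _ => 0) = 1 := by simp [Sb]

lemma monic_dvd_iff (e : F4 → ℕ) (D : Polynomial F4) :
    (D.Monic ∧ D ∣ Sb e) ↔ ∃ f : F4 → ℕ, (∀ γ, f γ ≤ e γ) ∧ D = Sb f := by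
  constructor
  · rintro ⟨hm, hd⟩
    refine ⟨fun γ => rootMultiplicity γ D, fun γ => ?_, ?_⟩
    · rw [← rm_Sb e γ]; exact rm_le_of_dvd (Sb_ne_zero e) hd γ
    · exact eq_prod_rm hm (Splits.of_dvd (Sb_splits e) (Sb_ne_zero e) hd)
  · rintro ⟨f, hf, rfl⟩; exact ⟨Sb_monic f, prod_dvd hf⟩

lemma Sb_mul (e f : F4 → ℕ) : Sb e * Sb f = Sb (e + f) := by
  rw [Sb, Sb, Sb, ← Finset.prod_mul_distrib]
  exact Finset.prod_congr rfl fun γ _ => by rw [← pow_add]; rfl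

lemma Sb_div {e f : F4 → ℕ} (h : ∀ γ, f γ ≤ e γ) : Sb e / Sb f = Sb (e - f) := by
  have h2 : Sb f * Sb (e - f) = Sb e := by
    rw [Sb_mul]; congr 1; funext γ
    exact Nat.add_sub_cancel' (h γ)
  have := EuclideanDomain.mul_div_cancel' (Sb_ne_zero f) ⟨Sb (e - f), h2.symm⟩
  exact mul_left_cancel₀ (Sb_ne_zero f) (by rw [this, h2])

lemma pl_dvd_Sb {f : F4 → ℕ} {γ : F4} (h : 0 < f γ) : pl γ ∣ Sb f :=
  dvd_trans (dvd_pow_self _ h.ne') (Finset.dvd_prod_of_mem _ (Finset.mem_univ γ))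

lemma coprime_Sb {f g : F4 → ℕ} (h : ∀ γ, f γ = 0 ∨ g γ = 0) : IsCoprime (Sb f) (Sb g) := by
  refine IsCoprime.prod_left fun γ _ => IsCoprime.prod_right fun δ _ => ?_
  rcases eq_or_ne γ δ with rfl | hne
  · rcases h γ with h0 | h0 <;> rw [h0, pow_zero]
    · exact isCoprime_one_left
    · exact isCoprime_one_right
  · exact (pl_coprime hne).pow

lemma unitary_iff {f : F4 → ℕ} (G : Polynomial F4) :
    IsUnitaryDivisor G (Sb f) ↔ ∃ g : F4 → ℕ, (∀ γ, g γ = 0 ∨ g γ = f γ) ∧ G = Sb g := by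
  constructor
  · rintro ⟨hm, hd, hc⟩
    obtain ⟨g, hg, rfl⟩ := (monic_dvd_iff f G).mp ⟨hm, hd⟩
    rw [Sb_div hg] at hc
    refine ⟨g, fun γ => ?_, rfl⟩
    by_contra hcon
    push_neg at hcon
    obtain ⟨h1, h2⟩ := hcon
    have hgpos : 0 < g γ := Nat.pos_of_ne_zero h1
    have hfg : 0 < (f - g) γ := by
      have := hg γ
      have : g γ < f γ := lt_of_le_of_ne (hg γ) h2
      simpa using Nat.sub_pos_of_lt this
    exact pl_not_unit γ (hc.isUnit_of_dvd' (pl_dvd_Sb hgpos) (pl_dvd_Sb hfg))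
  · rintro ⟨g, hg, rfl⟩
    have hle : ∀ γ, g γ ≤ f γ := fun γ => by rcases hg γ with h | h <;> simp [h]
    refine ⟨Sb_monic g, prod_dvd hle, ?_⟩
    rw [Sb_div hle]
    refine coprime_Sb fun γ => ?_
    rcases hg γ with h | h
    · exact Or.inl h
    · exact Or.inr (by simp [h])

lemma biunitary_iff (e : F4 → ℕ) (D : Polynomial F4) :
    IsBiunitaryDivisor D (Sb e) ↔
      ∃ f : F4 → ℕ, (∀ γ, f γ ≤ e γ ∧ ¬(0 < f γ ∧ 2 * f γ = e γ)) ∧ D = Sb f := by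
  constructor
  · rintro ⟨hm, hd, hbi⟩
    obtain ⟨f, hf, rfl⟩ := (monic_dvd_iff e D).mp ⟨hm, hd⟩
    rw [Sb_div hf] at hbi
    refine ⟨f, fun γ => ⟨hf γ, ?_⟩, rfl⟩
    rintro ⟨hpos, heq⟩
    set g : F4 → ℕ := fun δ => if δ = γ then f γ else 0 with hgdef
    have h1 : IsUnitaryDivisor (Sb g) (Sb f) := (unitary_iff _).mpr
      ⟨g, fun δ => by by_cases h : δ = γ <;> simp [hgdef, h], rfl⟩
    have h2 : IsUnitaryDivisor (Sb g) (Sb (e - f)) := (unitary_iff _).mpr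
      ⟨g, fun δ => by
        by_cases h : δ = γ
        · subst h; right; simp only [hgdef, if_pos rfl, Pi.sub_apply]; omega
        · left; simp [hgdef, h], rfl⟩
    have h3 := hbi _ h1 h2
    rw [← Sb_zero] at h3
    have := congrFun (Sb_inj h3) γ
    simp [hgdef] at this
    omega
  · rintro ⟨f, hf, rfl⟩
    have hle : ∀ γ, f γ ≤ e γ := fun γ => (hf γ).1
    refine ⟨Sb_monic f, prod_dvd hle, ?_⟩
    intro G hG1 hG2
    rw [Sb_div hle] at hG2
    obtain ⟨g, hg, rfl⟩ := (unitary_iff G).mp hG1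
    obtain ⟨g', hg', hgg'⟩ := (unitary_iff (Sb g)).mp hG2
    have hE := Sb_inj hgg'
    subst hE
    have : g = fun _ => 0 := by
      funext γ
      rcases hg γ with h | h
      · exact h
      rcases hg' γ with h' | h'
      · exact h'
      by_cases hz : f γ = 0
      · omega
      exfalso
      refine (hf γ).2 ⟨Nat.pos_of_ne_zero hz, ?_⟩
      have h2 : g γ = e γ - f γ := by simpa using h'
      have := hle γ
      omega
    rw [this, Sb_zero]

noncomputable def allowedF (n : ℕ) : Finset ℕ :=
  (Finset.range (n + 1)).filter fun i => ¬(0 < i ∧ 2 * i = n)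

lemma sigmaSS (e : F4 → ℕ) :
    sigmaStarStar (Sb e) = ∏ γ : F4, ∑ i ∈ allowedF (e γ), pl γ ^ i := by
  have hset : {D : Polynomial F4 | IsBiunitaryDivisor D (Sb e)} =
      ↑((Fintype.piFinset fun γ => allowedF (e γ)).image fun f => Sb f) := by
    ext D
    simp only [Set.mem_setOf_eq, biunitary_iff, Finset.coe_image, Set.mem_image,
      Finset.mem_coe, Fintype.mem_piFinset, allowedF, Finset.mem_filter, Finset.mem_range,
      Nat.lt_succ_iff]
    constructor
    · rintro ⟨f, hf, rfl⟩
      exact ⟨f, fun γ => ⟨(hf γ).1, (hf γ).2⟩, rfl⟩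
    · rintro ⟨f, hf, rfl⟩
      exact ⟨f, fun γ => ⟨(hf γ).1, (hf γ).2⟩, rfl⟩
  rw [sigmaStarStar, hset, finsum_mem_coe_finset,
    Finset.sum_image (fun f _ g _ h => Sb_inj h), Finset.prod_univ_sum]
  rfl

noncomputable def gp (γ : F4) (n : ℕ) : Polynomial F4 := ∑ i ∈ allowedF n, pl γ ^ i

lemma two_eq_zero_F4 : (2 : F4) = 0 := by
  have : CharP F4 2 := inferInstance
  exact CharTwo.two_eq_zero

lemma two_eq_zero_P : (2 : Polynomial F4) = 0 := by
  have : CharP (Polynomial F4) 2 := inferInstance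
  exact CharTwo.two_eq_zero

lemma pl_succ (γ : F4) : pl γ - 1 = pl (γ + 1) := by
  rw [pl, pl, map_add, map_one]; ring

lemma gp_odd {n : ℕ} (hn : Odd n) (γ : F4) :
    gp γ n * pl (γ + 1) = pl γ ^ (n + 1) - 1 := by
  have ha : allowedF n = Finset.range (n + 1) := by
    obtain ⟨k, rfl⟩ := hn
    ext i
    simp only [allowedF, Finset.mem_filter, Finset.mem_range]
    omega
  rw [gp, ha, ← pl_succ, geom_sum_mul]

lemma gp_even {m : ℕ} (hm : 1 ≤ m) (γ : F4) :
    gp γ (2 * m) * pl (γ + 1) = (pl γ ^ m - 1) * (pl γ ^ (m + 1) - 1) := by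
  have ha : allowedF (2 * m) = (Finset.range (2 * m + 1)).erase m := by
    ext i
    simp only [allowedF, Finset.mem_filter, Finset.mem_range, Finset.mem_erase]
    omega
  have hmem : m ∈ Finset.range (2 * m + 1) := by simp; omega
  have hsum : gp γ (2 * m) = (∑ i ∈ Finset.range (2 * m + 1), pl γ ^ i) - pl γ ^ m := by
    rw [gp, ha, eq_sub_iff_add_eq, Finset.sum_erase_add _ _ hmem]
  have hG := geom_sum_mul (pl γ) (2 * m + 1)
  rw [hsum, ← pl_succ]
  have h2 := two_eq_zero_P
  linear_combination hG + (pl γ ^ m - 1) * h2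

lemma rm_pow (u : F4) (q : Polynomial F4) (hq : q ≠ 0) (n : ℕ) :
    rootMultiplicity u (q ^ n) = n * rootMultiplicity u q := by
  rcases Nat.eq_zero_or_pos n with rfl | hn
  · simp [rootMultiplicity_eq_zero_iff, IsRoot]
  rw [← count_roots, roots_pow, Multiset.count_nsmul, count_roots]

lemma pow_sub_one_ne_zero {γ : F4} {n : ℕ} (hn : 1 ≤ n) : pl γ ^ n - 1 ≠ 0 := by
  have hmon : (pl γ ^ n).Monic := (pl_monic γ).pow n
  have hdeg : (pl γ ^ n).degree = n := by
    rw [degree_pow, pl, degree_X_sub_C]; simp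
  have : (pl γ ^ n - 1).Monic := by
    apply hmon.sub_of_left
    rw [degree_one, hdeg]
    exact_mod_cast hn
  exact this.ne_zero

lemma card_F4 : Fintype.card F4 = 4 := by
  rw [← Nat.card_eq_fintype_card, GaloisField.card 2 2 (by norm_num)]; norm_num

lemma cube_eq_one {u : F4} (hu : u ≠ 0) : u ^ 3 = 1 := by
  have := FiniteField.pow_card_sub_one_eq_one u hu
  rw [card_F4] at this
  exact this

lemma nat_cast_odd {t : ℕ} (ht : Odd t) : (t : F4) = 1 := by
  obtain ⟨k, rfl⟩ := ht
  push_cast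
  rw [show ((2:F4)) = 0 from two_eq_zero_F4]
  ring

lemma splits_dvd_three {γ : F4} {t : ℕ} (ht : Odd t)
    (hs : (pl γ ^ t - 1).Splits) : t ∣ 3 := by
  set h : Polynomial F4 := pl γ ^ t - 1 with hh
  have ht1 : 1 ≤ t := ht.pos
  have hne : h ≠ 0 := pow_sub_one_ne_zero ht1
  have hndeg : h.natDegree = t := by
    rw [hh]
    rw [natDegree_sub_eq_left_of_natDegree_lt]
    · rw [natDegree_pow, pl, natDegree_X_sub_C, mul_one]
    · rw [natDegree_one, natDegree_pow, pl, natDegree_X_sub_C, mul_one]; omega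
  -- separable
  have hnotdvd : ¬ pl γ ∣ h := by
    rw [pl, dvd_iff_isRoot]
    intro hroot
    have : (0 : F4) ^ t - 1 = 0 := by simpa [IsRoot, hh, pl] using hroot
    rw [zero_pow (by omega)] at this
    simp at this
  have hder : derivative h = pl γ ^ (t - 1) := by
    rw [hh, derivative_sub, derivative_one, derivative_pow, pl, derivative_X_sub_C,
      nat_cast_odd ht]
    simp
  have hsep : Separable h := by
    rw [Polynomial.separable_def, hder]
    exact (((prime_X_sub_C γ).irreducible.coprime_iff_not_dvd.mpr
      (by rw [← pl] at *; exact hnotdvd)).symm).pow_right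
  have hnodup : h.roots.Nodup := nodup_roots hsep
  have hcard : Multiset.card h.roots = t := by
    rw [(splits_iff_card_roots).mp hs, hndeg]
  -- map roots to roots of unity
  have hpowt : ∀ ρ ∈ h.roots, (ρ - γ) ^ t = 1 := by
    intro ρ hρ
    have := isRoot_of_mem_roots hρ
    have h0 : (ρ - γ) ^ t - 1 = 0 := by simpa [hh, IsRoot, pl] using this
    linear_combination h0
  set d := Nat.gcd t 3 with hd
  have hdpos : 0 < d := Nat.gcd_pos_of_pos_right t (by norm_num)
  have hpowd : ∀ ρ ∈ h.roots, (ρ - γ) ^ d = 1 := by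
    intro ρ hρ
    have h1 := hpowt ρ hρ
    have hu0 : ρ - γ ≠ 0 := by
      intro h0
      rw [h0, zero_pow (by omega)] at h1
      exact one_ne_zero h1.symm
    have h3 : (ρ - γ) ^ 3 = 1 := cube_eq_one hu0
    have o1 : orderOf (ρ - γ) ∣ t := orderOf_dvd_of_pow_eq_one h1
    have o2 : orderOf (ρ - γ) ∣ 3 := orderOf_dvd_of_pow_eq_one h3
    exact orderOf_dvd_iff_pow_eq_one.mp (Nat.dvd_gcd o1 o2)
  -- image in roots of X^d - 1
  set q : Polynomial F4 := X ^ d - 1 with hq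
  have hqne : q ≠ 0 := by
    have : q.natDegree = d := by
      rw [hq, natDegree_sub_eq_left_of_natDegree_lt] <;>
        simp [natDegree_X_pow, natDegree_one, hdpos]
    intro h0
    rw [h0, natDegree_zero] at this
    omega
  have himg : (h.roots.toFinset.image fun ρ => ρ - γ) ⊆ q.roots.toFinset := by
    intro u hu
    simp only [Finset.mem_image, Multiset.mem_toFinset] at hu ⊢
    obtain ⟨ρ, hρ, rfl⟩ := hu
    rw [mem_roots hqne]
    simp [hq, IsRoot, hpowd ρ hρ]
  have hinj : Set.InjOn (fun ρ => ρ - γ) h.roots.toFinset := by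
    intro x _ y _ hxy
    simpa using hxy
  have hcard1 : h.roots.toFinset.card = t := by
    rw [Multiset.toFinset_card_of_nodup hnodup, hcard]
  have hcard2 : q.roots.toFinset.card ≤ d := by
    calc q.roots.toFinset.card ≤ Multiset.card q.roots := Multiset.toFinset_card_le _
    _ ≤ q.natDegree := card_roots' q
    _ = d := by rw [hq, natDegree_sub_eq_left_of_natDegree_lt] <;>
        simp [natDegree_X_pow, natDegree_one, hdpos]
  have : t ≤ d := by
    calc t = (h.roots.toFinset.image fun ρ => ρ - γ).card := by
          rw [Finset.card_image_of_injOn hinj, hcard1]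
    _ ≤ q.roots.toFinset.card := Finset.card_le_card himg
    _ ≤ d := hcard2
  have : t = d := Nat.le_antisymm this (Nat.le_of_dvd (by omega) (Nat.gcd_dvd_left t 3))
  rw [this]
  exact Nat.gcd_dvd_right t 3

lemma frob (γ : F4) (s t : ℕ) : pl γ ^ (2 ^ s * t) - 1 = (pl γ ^ t - 1) ^ 2 ^ s := by
  have : Fact (Nat.Prime 2) := ⟨Nat.prime_two⟩
  rw [sub_pow_char_pow, one_pow, ← pow_mul, mul_comm t]

lemma odd_ordCompl {n : ℕ} (hn : n ≠ 0) : Odd (n / 2 ^ n.factorization 2) := by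
  have := Nat.not_dvd_ordCompl Nat.prime_two hn
  rcases Nat.even_or_odd (n / 2 ^ n.factorization 2) with h | h
  · exact absurd h.two_dvd this
  · exact h

lemma ordCompl_pos {n : ℕ} (hn : n ≠ 0) : 0 < n / 2 ^ n.factorization 2 :=
  Nat.ordCompl_pos 2 hn

lemma consec_le_three {m : ℕ} (hm : 1 ≤ m)
    (h1 : m / 2 ^ m.factorization 2 ∣ 3)
    (h2 : (m + 1) / 2 ^ (m + 1).factorization 2 ∣ 3) : m ≤ 3 := by
  by_contra hcon
  push_neg at hcon
  rcases Nat.even_or_odd m with he | ho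
  · have hodd : ¬ (2 ∣ (m + 1)) := by
      obtain ⟨k, rfl⟩ := he; omega
    rw [Nat.factorization_eq_zero_of_not_dvd hodd] at h2
    simp at h2
    have := Nat.le_of_dvd (by norm_num) h2
    omega
  · have hodd : ¬ (2 ∣ m) := by
      obtain ⟨k, rfl⟩ := ho; omega
    rw [Nat.factorization_eq_zero_of_not_dvd hodd] at h1
    simp at h1
    have := Nat.le_of_dvd (by norm_num) h1
    omega

lemma main_lemma (e : F4 → ℕ) (hb : sigmaStarStar (Sb e) = Sb e) (u : F4)
    (h1 : Even (e u)) (h2 : Odd (e (u + 1))) :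
    e u ∈ ({2, 4, 6} : Set ℕ) ∧ e (u + 1) ≤ 11 := by
  set v := u + 1 with hv
  have huv : v + 1 = u := by
    rw [hv, add_assoc, one_add_one_eq_two, two_eq_zero_F4, add_zero]
  have hid : ∏ γ : F4, gp γ (e γ) = Sb e := by rw [← hb, sigmaSS]; rfl
  set b := e v with hbdef
  set s := (b + 1).factorization 2 with hsdef
  set t := (b + 1) / 2 ^ s with htdef
  have hb1 : b + 1 ≠ 0 := by omega
  have hfact : 2 ^ s * t = b + 1 := Nat.ordProj_mul_ordCompl_eq_self (b + 1) 2
  have hs1 : 1 ≤ s := by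
    have : (2 : ℕ) ∣ b + 1 := by
      obtain ⟨k, hk⟩ := h2; omega
    exact (Nat.Prime.factorization_pos_of_dvd Nat.prime_two hb1 this)
  have htodd : Odd t := odd_ordCompl hb1
  have Hv : gp v b * pl u = (pl v ^ t - 1) ^ 2 ^ s := by
    rw [← frob, hfact]
    have := gp_odd h2 v
    rw [huv] at this
    exact this
  have hvt_ne : pl v ^ t - 1 ≠ 0 := pow_sub_one_ne_zero htodd.pos
  have hgpv_ne : gp v b ≠ 0 := by
    intro h0
    rw [h0, zero_mul] at Hv
    exact pow_ne_zero _ hvt_ne Hv.symm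
  -- root multiplicity at u
  have huv1 : u - v = 1 := by
    rw [hv]
    have : -(1 : F4) = 1 := CharTwo.neg_eq 1
    linear_combination this
  have hroot : 1 ≤ rootMultiplicity u (pl v ^ t - 1) := by
    rw [Nat.succ_le_iff, rootMultiplicity_pos hvt_ne]
    show eval u (pl v ^ t - 1) = 0
    rw [eval_sub, eval_pow, eval_one, pl, eval_sub, eval_X, eval_C, huv1, one_pow, sub_self]
  have hRMgpv : 2 ^ s - 1 ≤ rootMultiplicity u (gp v b) := by
    have e1 := congrArg (rootMultiplicity u) Hv
    rw [rootMultiplicity_mul (by rw [Hv]; exact pow_ne_zero _ hvt_ne),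
      rm_pow u _ hvt_ne] at e1
    have : rootMultiplicity u (pl u) = 1 := by
      rw [pl]; exact rootMultiplicity_X_sub_C_self
    rw [this] at e1
    have h8 : 2 ^ s ≤ 2 ^ s * rootMultiplicity u (pl v ^ t - 1) :=
      Nat.le_mul_of_pos_right _ hroot
    omega
  have heu : e u = rootMultiplicity u (gp v b) +
      rootMultiplicity u (∏ γ ∈ Finset.univ.erase v, gp γ (e γ)) := by
    have hsplit2 : gp v b * ∏ γ ∈ Finset.univ.erase v, gp γ (e γ) = Sb e := by
      rw [← hid]; exact Finset.mul_prod_erase Finset.univ (fun γ => gp γ (e γ)) (Finset.mem_univ v)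
    have := congrArg (rootMultiplicity u) hsplit2
    rw [rootMultiplicity_mul (by rw [hsplit2]; exact Sb_ne_zero e), rm_Sb] at this
    omega
  have heu_ge : 2 ^ s - 1 ≤ e u := by omega
  have heu_pos : 1 ≤ e u := by
    have : (2:ℕ) ≤ 2 ^ s := by
      calc (2:ℕ) = 2 ^ 1 := (pow_one 2).symm
      _ ≤ 2 ^ s := Nat.pow_le_pow_right (by norm_num) hs1
    omega
  obtain ⟨m, hm⟩ := h1
  have hm1 : 1 ≤ m := by omega
  have Hu : gp u (e u) * pl v = (pl u ^ m - 1) * (pl u ^ (m + 1) - 1) := by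
    have := gp_even hm1 u
    rw [show 2 * m = e u by omega, ← hv] at this
    exact this
  -- splitting conditions
  have hgpu_dvd : gp u (e u) ∣ Sb e := by
    rw [← hid]; exact Finset.dvd_prod_of_mem _ (Finset.mem_univ u)
  have hgpu_sp : (gp u (e u)).Splits :=
    Splits.of_dvd (Sb_splits e) (Sb_ne_zero e) hgpu_dvd
  have hprod_sp : ((pl u ^ m - 1) * (pl u ^ (m + 1) - 1)).Splits := by
    rw [← Hu]; exact hgpu_sp.mul (pl_splits v)
  have hprod_ne : (pl u ^ m - 1) * (pl u ^ (m + 1) - 1) ≠ 0 :=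
    mul_ne_zero (pow_sub_one_ne_zero hm1) (pow_sub_one_ne_zero (by omega))
  have hfac : ∀ k : ℕ, 1 ≤ k → k ∣ m * (m+1) → True := fun _ _ _ => trivial
  have key : ∀ k : ℕ, 1 ≤ k → (pl u ^ k - 1) ∣ (pl u ^ m - 1) * (pl u ^ (m + 1) - 1) →
      k / 2 ^ k.factorization 2 ∣ 3 := by
    intro k hk hdvd
    set t1 := k / 2 ^ k.factorization 2 with ht1
    have hkfact : 2 ^ k.factorization 2 * t1 = k := Nat.ordProj_mul_ordCompl_eq_self k 2
    have ht1odd : Odd t1 := odd_ordCompl (by omega)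
    have hdvd2 : (pl u ^ t1 - 1) ∣ (pl u ^ k - 1) := by
      rw [← hkfact, frob]
      exact dvd_pow_self _ (by positivity)
    exact splits_dvd_three ht1odd
      (Splits.of_dvd hprod_sp hprod_ne (hdvd2.trans hdvd))
  have t1d3 := key m hm1 (Dvd.intro _ rfl)
  have t2d3 := key (m + 1) (by omega) (Dvd.intro_left _ rfl)
  have hm3 : m ≤ 3 := consec_le_three hm1 t1d3 t2d3
  constructor
  · interval_cases m <;> simp [Set.mem_insert_iff] <;> omega
  · -- bound on b = e v
    have hs2 : s ≤ 2 := by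
      by_contra hcon
      push_neg at hcon
      have : (8:ℕ) ≤ 2 ^ s := by
        calc (8:ℕ) = 2 ^ 3 := by norm_num
        _ ≤ 2 ^ s := Nat.pow_le_pow_right (by norm_num) hcon
      omega
    have htd3 : t ∣ 3 := by
      have hdvd3 : (pl v ^ t - 1) ∣ Sb e * pl u := by
        have h9 : (pl v ^ t - 1) ∣ (pl v ^ t - 1) ^ 2 ^ s :=
          dvd_pow_self _ (by positivity)
        rw [← Hv] at h9
        have h10 : gp v b ∣ Sb e := by
          rw [← hid]; exact Finset.dvd_prod_of_mem _ (Finset.mem_univ v)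
        exact h9.trans (mul_dvd_mul_right h10 _)
      have hsp3 : (pl v ^ t - 1).Splits :=
        Splits.of_dvd ((Sb_splits e).mul (pl_splits u))
          (mul_ne_zero (Sb_ne_zero e) (pl_ne_zero u)) hdvd3
      exact splits_dvd_three htodd hsp3
    have ht3 : t ≤ 3 := Nat.le_of_dvd (by norm_num) htd3
    have : 2 ^ s ≤ 4 := by
      calc 2 ^ s ≤ 2 ^ 2 := Nat.pow_le_pow_right (by norm_num) hs2
      _ = 4 := by norm_num
    have : b + 1 ≤ 12 := by
      calc b + 1 = 2 ^ s * t := hfact.symm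
      _ ≤ 4 * 3 := Nat.mul_le_mul this ht3
      _ = 12 := by norm_num
    omega



theorem stmt14 (α : F4) (hα : α ^ 2 + α + 1 = 0) (a b c d : ℕ)
    (hbup : IsBUP (X ^ a * (X + 1) ^ b * (X + C α) ^ c * (X + C α + 1) ^ d :
      Polynomial F4)) :
    (Even a → Odd b → a ∈ ({2, 4, 6} : Set ℕ) ∧ b ≤ 11) ∧
    (Odd a → Even b → a ≤ 11 ∧ b ∈ ({2, 4, 6} : Set ℕ)) ∧
    (Even c → Odd d → c ∈ ({2, 4, 6} : Set ℕ) ∧ d ≤ 11) ∧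
    (Odd c → Even d → c ≤ 11 ∧ d ∈ ({2, 4, 6} : Set ℕ)) := by
  have h11 : (1 : F4) + 1 = 0 := by rw [one_add_one_eq_two, two_eq_zero_F4]
  have hα0 : α ≠ 0 := by rintro rfl; simp at hα
  have hα1 : α ≠ 1 := by
    rintro rfl
    rw [one_pow, h11, zero_add] at hα
    exact one_ne_zero hα
  have hαp0 : α + 1 ≠ 0 := by
    intro h
    have : α = 1 := by linear_combination h - h11
    exact hα1 this
  have hαp1 : α + 1 ≠ 1 := by
    intro h
    exact hα0 (by linear_combination h)
  have hαpα : α + 1 ≠ α := by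
    intro h
    have : (1 : F4) = 0 := by linear_combination h
    exact one_ne_zero this
  have h10 : (1 : F4) ≠ 0 := one_ne_zero
  set e : F4 → ℕ := fun γ => if γ = 0 then a else if γ = 1 then b else if γ = α then c else d
    with he
  have he0 : e 0 = a := by simp [he]
  have he1 : e 1 = b := by simp [he, h10]
  have heα : e α = c := by simp [he, hα0, hα1]
  have heαp : e (α + 1) = d := by simp [he, hαp0, hαp1, hαpα]
  have huniv : (Finset.univ : Finset F4) = {0, 1, α, α + 1} := by
    symm
    apply Finset.eq_univ_of_card
    rw [card_F4]
    rw [Finset.card_insert_of_notMem (by simp [Ne.symm hα0, Ne.symm hαp0, Ne.symm h10, Ne.symm hα1, Ne.symm hαp1, Ne.symm hαpα, hα0, hαp0, h10, hα1, hαp1, hαpα]),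
      Finset.card_insert_of_notMem (by simp [Ne.symm hα0, Ne.symm hαp0, Ne.symm h10, Ne.symm hα1, Ne.symm hαp1, Ne.symm hαpα, hα0, hαp0, h10, hα1, hαp1, hαpα]),
      Finset.card_insert_of_notMem (by simp [Ne.symm hα0, Ne.symm hαp0, Ne.symm h10, Ne.symm hα1, Ne.symm hαp1, Ne.symm hαpα, hα0, hαp0, h10, hα1, hαp1, hαpα]),
      Finset.card_singleton]
  have hSb : Sb e = (X ^ a * (X + 1) ^ b * (X + C α) ^ c * (X + C α + 1) ^ d :
      Polynomial F4) := by
    rw [Sb, huniv]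
    rw [Finset.prod_insert (by simp [Ne.symm hα0, Ne.symm hαp0, Ne.symm h10, Ne.symm hα1, Ne.symm hαp1, Ne.symm hαpα, hα0, hαp0, h10, hα1, hαp1, hαpα]),
      Finset.prod_insert (by simp [Ne.symm hα0, Ne.symm hαp0, Ne.symm h10, Ne.symm hα1, Ne.symm hαp1, Ne.symm hαpα, hα0, hαp0, h10, hα1, hαp1, hαpα]),
      Finset.prod_insert (by simp [Ne.symm hα0, Ne.symm hαp0, Ne.symm h10, Ne.symm hα1, Ne.symm hαp1, Ne.symm hαpα, hα0, hαp0, h10, hα1, hαp1, hαpα]),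
      Finset.prod_singleton, he0, he1, heα, heαp]
    have p0 : pl 0 = X := by simp [pl]
    have p1 : pl 1 = X + 1 := by rw [pl, CharTwo.sub_eq_add, map_one]
    have pα : pl α = X + C α := by rw [pl, CharTwo.sub_eq_add]
    have pαp : pl (α + 1) = X + C α + 1 := by
      rw [pl, CharTwo.sub_eq_add, map_add, map_one, add_assoc]
    rw [p0, p1, pα, pαp]
    ring
  rw [IsBUP, ← hSb] at hbup
  have hα1p : α + 1 + 1 = α := by rw [add_assoc, h11, add_zero]
  have h0p1 : (0 : F4) + 1 = 1 := zero_add 1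
  have h1p1 : (1 : F4) + 1 = 0 := h11
  refine ⟨?_, ?_, ?_, ?_⟩
  · intro hEa hOb
    have := main_lemma e hbup 0 (by rwa [he0]) (by rwa [h0p1, he1])
    rw [he0, h0p1, he1] at this
    exact this
  · intro hOa hEb
    have := main_lemma e hbup 1 (by rwa [he1]) (by rwa [h1p1, he0])
    rw [he1, h1p1, he0] at this
    exact ⟨this.2, this.1⟩
  · intro hEc hOd
    have := main_lemma e hbup α (by rwa [heα]) (by rwa [heαp])
    rw [heα, heαp] at this
    exact this
  · intro hOc hEd
    have := main_lemma e hbup (α + 1) (by rwa [heαp]) (by rwa [hα1p, heα])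
    rw [heαp, hα1p, heα] at this
    exact ⟨this.2, this.1⟩
end

section
/- Let p be an odd prime, q = p², and m ∈ Ω. Then the polynomial A = ∏_{γ ∈ F_q} (x − γ)^{2m} = (x^q − x)^{2m} is bi-unitary perfect over F_q. -/
open Polynomial
set_option linter.unusedSectionVars false

variable {F : Type*} [Field F]

/-- `Ω₁ = {N ∈ ℕ* : N ∣ p²-1 and 2N+2 ∣ p²-1}`. -/
def Omega1 (p : ℕ) : Set ℕ := {N | 0 < N ∧ N ∣ (p ^ 2 - 1) ∧ (2 * N + 2) ∣ (p ^ 2 - 1)}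

/-- `Ω₂ = {pN : N ∈ ℕ*, N ∣ p²-1 and 2pN+2 ∣ p²-1}`. -/
def Omega2 (p : ℕ) : Set ℕ :=
  {m | ∃ N : ℕ, 0 < N ∧ m = p * N ∧ N ∣ (p ^ 2 - 1) ∧ (2 * p * N + 2) ∣ (p ^ 2 - 1)}

/-- `Ω₃ = {N ∈ ℕ* : N ∣ p²-1, 2N+2 = M·p with M ∣ p²-1}`. -/
def Omega3 (p : ℕ) : Set ℕ :=
  {N | 0 < N ∧ N ∣ (p ^ 2 - 1) ∧ ∃ M : ℕ, M ∣ (p ^ 2 - 1) ∧ 2 * N + 2 = M * p}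

/-- `Ω₄ = {N ∈ ℕ* : N ∣ p²-1, 2N+2 = M·p² with M ∣ p²-1}`. -/
def Omega4 (p : ℕ) : Set ℕ :=
  {N | 0 < N ∧ N ∣ (p ^ 2 - 1) ∧ ∃ M : ℕ, M ∣ (p ^ 2 - 1) ∧ 2 * N + 2 = M * p ^ 2}

/-- `Ω = Ω₁ ∪ Ω₂ ∪ Ω₃ ∪ Ω₄`. -/
def OmegaSet (p : ℕ) : Set ℕ := Omega1 p ∪ Omega2 p ∪ Omega3 p ∪ Omega4 p

namespace BUPAux

variable {K : Type*} [Field K] [Fintype K] [DecidableEq K]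

lemma prod_monic : (∏ γ : K, (X - C γ)).Monic :=
  monic_prod_of_monic _ _ fun γ _ => monic_X_sub_C γ

lemma prod_ne_zero : (∏ γ : K, (X - C γ)) ≠ 0 := prod_monic.ne_zero

lemma monic_XqX : (X ^ Fintype.card K - X : K[X]).Monic := by
  have h1 : 1 < Fintype.card K := Fintype.one_lt_card
  have h2 : Fintype.card K - 1 + 1 = Fintype.card K := by omega
  rw [← h2]
  apply monic_X_pow_sub
  rw [degree_X]
  exact_mod_cast (by omega : 1 < Fintype.card K - 1 + 1)

lemma splits_XqX : (X ^ Fintype.card K - X : K[X]).Splits := by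
  rw [splits_iff_card_roots, FiniteField.roots_X_pow_card_sub_X,
    FiniteField.X_pow_card_sub_X_natDegree_eq K Fintype.one_lt_card]
  simp [← Finset.card_def, Finset.card_univ]

lemma prod_eq : (∏ γ : K, (X - C γ)) = X ^ Fintype.card K - X := by
  have h := (splits_XqX (K := K)).eq_prod_roots_of_monic (monic_XqX (K := K))
  rw [FiniteField.roots_X_pow_card_sub_X] at h
  rw [h]
  rfl

lemma multiset_swap {ι κ R : Type*} [CommMonoid R] (s : Finset ι) (M : Multiset κ)
    (f : ι → κ → R) :
    ∏ i ∈ s, (M.map (f i)).prod = (M.map fun c => ∏ i ∈ s, f i c).prod := by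
  induction M using Multiset.induction_on with
  | empty => simp
  | cons a M ih => simp [Multiset.map_cons, Multiset.prod_cons, Finset.prod_mul_distrib, ih]

lemma prod_comp_shift {P : K[X]} (hm : P.Monic) (hs : P.Splits) :
    ∏ γ : K, P.comp (X - C γ) = (∏ γ : K, (X - C γ)) ^ P.natDegree := by
  have hR : Multiset.card P.roots = P.natDegree := splits_iff_card_roots.mp hs
  have hP : P = (P.roots.map fun a => X - C a).prod :=
    hs.eq_prod_roots_of_monic hm
  calc ∏ γ : K, P.comp (X - C γ)
      = ∏ γ : K, ((P.roots.map fun a => X - C a).prod).comp (X - C γ) := by rw [← hP]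
    _ = ∏ γ : K, ((P.roots.map fun a => X - C a).map fun r => r.comp (X - C γ)).prod := by
        refine Finset.prod_congr rfl fun γ _ => ?_
        exact multiset_prod_comp _ _
    _ = ∏ γ : K, (P.roots.map fun a => X - C (γ + a)).prod := by
        refine Finset.prod_congr rfl fun γ _ => ?_
        rw [Multiset.map_map]
        refine congrArg _ (Multiset.map_congr rfl fun a _ => ?_)
        simp only [Function.comp_apply, sub_comp, X_comp, C_comp, C_add]
        ring
    _ = (P.roots.map fun a => ∏ γ : K, (X - C (γ + a))).prod := multiset_swap _ _ _
    _ = (P.roots.map fun _ => ∏ γ : K, (X - C γ)).prod := by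
        refine congrArg _ (Multiset.map_congr rfl fun a _ => ?_)
        exact Fintype.prod_equiv (Equiv.addRight a) _ _ fun γ => rfl
    _ = (∏ γ : K, (X - C γ)) ^ P.natDegree := by
        rw [Multiset.map_const', Multiset.prod_replicate, hR]

lemma dvd_aux (n : ℕ) (hd : n ∣ Fintype.card K - 1) :
    (X ^ n - 1 : K[X]) ∣ X ^ Fintype.card K - X := by
  obtain ⟨k, hk⟩ := hd
  have h1 : (X ^ n - 1 : K[X]) ∣ X ^ (Fintype.card K - 1) - 1 := by
    rw [hk, pow_mul]
    simpa using sub_dvd_pow_sub_pow (X ^ n : K[X]) 1 k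
  refine h1.trans ⟨X, ?_⟩
  have hq : Fintype.card K - 1 + 1 = Fintype.card K := by
    have := Fintype.one_lt_card (α := K); omega
  rw [sub_mul, one_mul, ← pow_succ, hq]

lemma B1 (n : ℕ) (hn : n ≠ 0) (hd : n ∣ Fintype.card K - 1) :
    ∏ γ : K, ((X - C γ) ^ n - 1) = (∏ γ : K, (X - C γ)) ^ n := by
  have hmon : (X ^ n - 1 : K[X]).Monic := by
    simpa using monic_X_pow_sub_C (1 : K) hn
  have hs : (X ^ n - 1 : K[X]).Splits :=
    Splits.of_dvd splits_XqX (FiniteField.X_pow_card_sub_X_ne_zero K Fintype.one_lt_card)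
      (dvd_aux n hd)
  have h := prod_comp_shift hmon hs
  have hdeg : (X ^ n - 1 : K[X]).natDegree = n := by
    simpa using natDegree_X_pow_sub_C (n := n) (r := (1 : K))
  rw [hdeg] at h
  simpa [sub_comp, pow_comp] using h

lemma B2 (n : ℕ) (hn : n ≠ 0) (hd : 2 * n ∣ Fintype.card K - 1) :
    ∏ γ : K, ((X - C γ) ^ n + 1) = (∏ γ : K, (X - C γ)) ^ n := by
  have key : (X ^ n + 1 : K[X]) = X ^ n - C (-1) := by
    simp [sub_neg_eq_add]
  have hmon : (X ^ n + 1 : K[X]).Monic := by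
    rw [key]; exact monic_X_pow_sub_C (-1 : K) hn
  have hdvd : (X ^ n + 1 : K[X]) ∣ X ^ Fintype.card K - X := by
    refine dvd_trans ?_ (dvd_aux (2 * n) hd)
    have h2 : (X ^ (2 * n) - 1 : K[X]) = (X ^ n - 1) * (X ^ n + 1) := by
      rw [two_mul, pow_add]; ring
    rw [h2]
    exact dvd_mul_left _ _
  have hs : (X ^ n + 1 : K[X]).Splits :=
    Splits.of_dvd splits_XqX (FiniteField.X_pow_card_sub_X_ne_zero K Fintype.one_lt_card)
      hdvd
  have h := prod_comp_shift hmon hs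
  have hdeg : (X ^ n + 1 : K[X]).natDegree = n := by
    rw [key]; exact natDegree_X_pow_sub_C
  rw [hdeg] at h
  simpa [add_comp, pow_comp] using h

noncomputable def Phi (e : K → ℕ) : K[X] := ∏ γ : K, (X - C γ) ^ e γ

lemma Phi_monic (e : K → ℕ) : (Phi e).Monic :=
  monic_prod_of_monic _ _ fun γ _ => (monic_X_sub_C γ).pow _

lemma Phi_ne_zero (e : K → ℕ) : Phi e ≠ 0 := (Phi_monic e).ne_zero

lemma roots_Phi (e : K → ℕ) : (Phi e).roots = ∑ γ : K, e γ • ({γ} : Multiset K) := by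
  rw [Phi, Polynomial.roots_prod _ _ (Phi_ne_zero e)]
  simp only [roots_pow, roots_X_sub_C]
  rfl

lemma count_roots_Phi (e : K → ℕ) (γ : K) : (Phi e).roots.count γ = e γ := by
  rw [roots_Phi, Multiset.count_sum']
  simp [Multiset.count_nsmul, Multiset.count_singleton]

lemma rootMult_Phi (e : K → ℕ) (γ : K) : rootMultiplicity γ (Phi e) = e γ := by
  rw [← count_roots]; exact count_roots_Phi e γ

lemma Phi_injective : Function.Injective (Phi (K := K)) := fun e f h =>
  funext fun γ => by rw [← rootMult_Phi e γ, ← rootMult_Phi f γ, h]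

lemma Phi_mul (e f : K → ℕ) : Phi (fun γ => e γ + f γ) = Phi e * Phi f := by
  rw [Phi, Phi, Phi, ← Finset.prod_mul_distrib]
  exact Finset.prod_congr rfl fun γ _ => pow_add _ _ _

lemma Phi_dvd {e f : K → ℕ} (h : ∀ γ, e γ ≤ f γ) : Phi e ∣ Phi f := by
  refine ⟨Phi fun γ => f γ - e γ, ?_⟩
  rw [← Phi_mul]
  congr 1
  funext γ
  have := h γ
  omega

lemma Phi_div {e f : K → ℕ} (h : ∀ γ, e γ ≤ f γ) :
    Phi f / Phi e = Phi fun γ => f γ - e γ := by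
  have heq : Phi f = Phi e * Phi fun γ => f γ - e γ := by
    rw [← Phi_mul]
    congr 1
    funext γ
    have := h γ
    omega
  rw [heq, mul_div_cancel_left₀ _ (Phi_ne_zero e)]

lemma coprime_pow_prod (γ₀ : K) (k : ℕ) (e : K → ℕ) :
    IsCoprime ((X - C γ₀) ^ k) (∏ γ ∈ Finset.univ.erase γ₀, (X - C γ) ^ e γ) := by
  refine IsCoprime.prod_right fun γ hγ => ?_
  exact (pairwise_coprime_X_sub_C (Function.injective_id (α := K))
    (Finset.ne_of_mem_erase hγ).symm).pow

lemma rootMult_eq_zero_of_coprime {G H : K[X]} (h : IsCoprime G H) {γ : K}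
    (hγ : G.IsRoot γ) : rootMultiplicity γ H = 0 := by
  apply rootMultiplicity_eq_zero
  intro hH
  exact not_isUnit_X_sub_C γ
    (h.isUnit_of_dvd' (dvd_iff_isRoot.mpr hγ) (dvd_iff_isRoot.mpr hH))

lemma Phi_single (a : K) : Phi (fun γ => if γ = a then 1 else 0) = X - C a := by
  simp [Phi, pow_ite, Finset.prod_ite_eq' Finset.univ a fun γ => X - C γ]

lemma multiset_prod_linear (M : Multiset K) :
    (M.map fun c => (X : K[X]) - C c).prod = Phi fun γ => M.count γ := by
  induction M using Multiset.induction_on with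
  | empty => simp [Phi]
  | cons a M ih =>
      rw [Multiset.map_cons, Multiset.prod_cons, ih]
      have h1 : (fun γ => (a ::ₘ M).count γ)
          = fun γ => (if γ = a then 1 else 0) + M.count γ :=
        funext fun γ => by rw [Multiset.count_cons, add_comm]
      rw [h1, Phi_mul, Phi_single]

lemma splits_Phi (e : K → ℕ) : (Phi e).Splits := by
  rw [Phi]
  exact Splits.prod fun γ _ => (Splits.X_sub_C _).pow _

lemma unitary_pow_of_eq {e : K → ℕ} (γ : K) (k : ℕ) (hk : e γ = k) :
    IsUnitaryDivisor ((X - C γ) ^ k) (Phi e) := by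
  refine ⟨(monic_X_sub_C γ).pow k, ?_, ?_⟩
  · rw [Phi, ← hk]
    exact Finset.dvd_prod_of_mem _ (Finset.mem_univ γ)
  · have hsplit : Phi e = (X - C γ) ^ k * ∏ γ' ∈ Finset.univ.erase γ, (X - C γ') ^ e γ' := by
      rw [Phi, ← hk]
      exact (Finset.mul_prod_erase Finset.univ (fun γ' => (X - C γ') ^ e γ')
        (Finset.mem_univ γ)).symm
    rw [hsplit, mul_div_cancel_left₀ _ (pow_ne_zero _ (X_sub_C_ne_zero γ))]
    exact coprime_pow_prod γ k e

lemma biunit_iff (m : ℕ) (hm : m ≠ 0) (D : K[X]) :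
    IsBiunitaryDivisor D (Phi fun _ : K => 2 * m) ↔
      ∃ e : K → ℕ, (∀ γ, e γ ≤ 2 * m ∧ e γ ≠ m) ∧ D = Phi e := by
  constructor
  · rintro ⟨hmon, hdvd, hG⟩
    have hA0 : Phi (fun _ : K => 2 * m) ≠ 0 := Phi_ne_zero _
    have hD0 : D ≠ 0 := hmon.ne_zero
    set e : K → ℕ := fun γ => rootMultiplicity γ D with he
    have hle : ∀ γ, e γ ≤ 2 * m := fun γ => by
      have h := Multiset.count_le_of_le γ (roots.le_of_dvd hA0 hdvd)
      rwa [count_roots, count_roots_Phi] at h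
    have hDsplits := Splits.of_dvd (splits_Phi _) hA0 hdvd
    have hDeq : D = Phi e := by
      conv_lhs => rw [hDsplits.eq_prod_roots_of_monic hmon]
      rw [multiset_prod_linear]
      congr 1
      funext γ
      rw [count_roots]
    refine ⟨e, fun γ => ⟨hle γ, ?_⟩, hDeq⟩
    by_contra hne
    have hGD : IsUnitaryDivisor ((X - C γ) ^ m) D := by
      rw [hDeq]; exact unitary_pow_of_eq γ m hne
    have hADeq : Phi (fun _ : K => 2 * m) / D = Phi fun γ' => 2 * m - e γ' := by
      rw [hDeq]; exact Phi_div hle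
    have hGAD : IsUnitaryDivisor ((X - C γ) ^ m) (Phi (fun _ : K => 2 * m) / D) := by
      rw [hADeq]
      refine unitary_pow_of_eq γ m ?_
      have := hle γ
      omega
    have h1 := hG _ hGD hGAD
    have h2 : (((X - C γ) ^ m : K[X])).natDegree = m := by
      simp [natDegree_pow]
    rw [h1, natDegree_one] at h2
    exact hm h2.symm
  · rintro ⟨e, he, rfl⟩
    have hle : ∀ γ, e γ ≤ 2 * m := fun γ => (he γ).1
    have hDdvdA : Phi e ∣ Phi fun _ : K => 2 * m := Phi_dvd hle
    refine ⟨Phi_monic e, hDdvdA, ?_⟩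
    intro G hGD hGAD
    by_contra hG1
    obtain ⟨hGmon, hGdvdD, hGcop⟩ := hGD
    obtain ⟨-, hGdvdAD, hGcop2⟩ := hGAD
    have hG0 : G ≠ 0 := hGmon.ne_zero
    have hGsplits : G.Splits :=
      Splits.of_dvd (splits_Phi e) (Phi_ne_zero e) hGdvdD
    have hdeg : G.degree ≠ 0 := by
      intro h
      exact hG1 (hGmon.natDegree_eq_zero.mp
        (natDegree_eq_zero_iff_degree_le_zero.mpr h.le))
    obtain ⟨γ, hγ⟩ := hGsplits.exists_eval_eq_zero hdeg
    have hroot : G.IsRoot γ := hγ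
    have key : ∀ f : K → ℕ, G ∣ Phi f → IsCoprime G (Phi f / G) →
        f γ = rootMultiplicity γ G := by
      intro f hdvd' hcop'
      have hPsplit : Phi f = G * (Phi f / G) :=
        (EuclideanDomain.mul_div_cancel' hG0 hdvd').symm
      have hmul := rootMultiplicity_mul (x := γ)
        (show G * (Phi f / G) ≠ 0 by rw [← hPsplit]; exact Phi_ne_zero f)
      rw [← hPsplit, rootMult_Phi] at hmul
      rw [hmul, rootMult_eq_zero_of_coprime hcop' hroot, add_zero]
    have h1 : e γ = rootMultiplicity γ G := key e hGdvdD hGcop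
    have hADeq : Phi (fun _ : K => 2 * m) / Phi e = Phi fun γ' => 2 * m - e γ' :=
      Phi_div hle
    rw [hADeq] at hGdvdAD hGcop2
    have h2 : 2 * m - e γ = rootMultiplicity γ G := key _ hGdvdAD hGcop2
    have := (he γ).2
    have := hle γ
    omega

end BUPAux

namespace BUPAux
variable {K : Type*} [Field K] [Fintype K] [DecidableEq K]

lemma sigmaStarStar_eq (m : ℕ) (hm : m ≠ 0) :
    sigmaStarStar ((∏ γ : K, (X - C γ)) ^ (2 * m)) =
      ∏ γ : K, ∑ b ∈ (Finset.range (2 * m + 1)).erase m, (X - C γ) ^ b := by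
  have hA : (∏ γ : K, (X - C γ)) ^ (2 * m) = Phi fun _ : K => 2 * m :=
    (Finset.prod_pow _ _ _).symm
  rw [sigmaStarStar, hA]
  have hset : {D : K[X] | IsBiunitaryDivisor D (Phi fun _ : K => 2 * m)} =
      ↑((Fintype.piFinset fun _ : K => (Finset.range (2 * m + 1)).erase m).image Phi) := by
    ext D
    rw [Set.mem_setOf_eq, biunit_iff m hm, Finset.coe_image, Set.mem_image]
    constructor
    · rintro ⟨e, he, rfl⟩
      refine ⟨e, ?_, rfl⟩
      rw [Finset.mem_coe, Fintype.mem_piFinset]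
      intro γ
      rw [Finset.mem_erase, Finset.mem_range]
      exact ⟨(he γ).2, by have := (he γ).1; omega⟩
    · rintro ⟨e, he, rfl⟩
      rw [Finset.mem_coe, Fintype.mem_piFinset] at he
      refine ⟨e, fun γ => ?_, rfl⟩
      have := he γ
      rw [Finset.mem_erase, Finset.mem_range] at this
      exact ⟨by omega, this.1⟩
  rw [hset, finsum_mem_coe_finset, Finset.sum_image fun a _ b _ h => Phi_injective h]
  exact (Finset.prod_univ_sum _ _).symm

lemma geom_aux {R : Type*} [CommRing R] (y : R) (m : ℕ) :
    (y - 1) * ∑ b ∈ (Finset.range (2 * m + 1)).erase m, y ^ b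
      = (y ^ m - 1) * (y ^ (m + 1) + 1) := by
  have hmem : m ∈ Finset.range (2 * m + 1) := Finset.mem_range.mpr (by omega)
  have hsum := Finset.add_sum_erase (Finset.range (2 * m + 1)) (fun b => y ^ b) hmem
  have hgeom := geom_sum_mul y (2 * m + 1)
  have hrw : ∑ b ∈ (Finset.range (2 * m + 1)).erase m, y ^ b
      = (∑ b ∈ Finset.range (2 * m + 1), y ^ b) - y ^ m := by
    rw [← hsum]; ring
  have e1 : y ^ (2 * m + 1) = y ^ m * y ^ (m + 1) := by
    rw [← pow_add]; congr 1; omega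
  have e2 : y ^ (m + 1) = y ^ m * y := pow_succ y m
  calc (y - 1) * ∑ b ∈ (Finset.range (2 * m + 1)).erase m, y ^ b
      = (∑ b ∈ Finset.range (2 * m + 1), y ^ b) * (y - 1) - (y - 1) * y ^ m := by
        rw [hrw]; ring
    _ = y ^ (2 * m + 1) - 1 - (y - 1) * y ^ m := by rw [hgeom]
    _ = (y ^ m - 1) * (y ^ (m + 1) + 1) := by rw [e1, e2]; ring

lemma prod_shift_one : (∏ γ : K, ((X - C γ) - 1)) = ∏ γ : K, (X - C γ) := by
  have h : ∀ γ : K, (X - C γ) - (1 : K[X]) = X - C (γ + 1) := fun γ => by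
    rw [C_add, C_1]; ring
  calc ∏ γ : K, ((X - C γ) - 1) = ∏ γ : K, (X - C (γ + 1)) :=
        Finset.prod_congr rfl fun γ _ => h γ
    _ = ∏ γ : K, (X - C γ) := Fintype.prod_equiv (Equiv.addRight (1 : K)) _ _ fun γ => rfl

lemma bup_of_prods (m : ℕ) (hm : m ≠ 0)
    (h1 : ∏ γ : K, ((X - C γ) ^ m - 1) = (∏ γ : K, (X - C γ)) ^ m)
    (h2 : ∏ γ : K, ((X - C γ) ^ (m + 1) + 1) = (∏ γ : K, (X - C γ)) ^ (m + 1)) :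
    sigmaStarStar ((∏ γ : K, (X - C γ)) ^ (2 * m)) = (∏ γ : K, (X - C γ)) ^ (2 * m) := by
  rw [sigmaStarStar_eq m hm]
  apply mul_left_cancel₀ (prod_ne_zero (K := K))
  calc (∏ γ : K, (X - C γ)) *
        ∏ γ : K, ∑ b ∈ (Finset.range (2 * m + 1)).erase m, (X - C γ) ^ b
      = (∏ γ : K, ((X - C γ) - 1)) *
        ∏ γ : K, ∑ b ∈ (Finset.range (2 * m + 1)).erase m, (X - C γ) ^ b := by
        rw [prod_shift_one]
    _ = ∏ γ : K, (((X - C γ) - 1) *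
        ∑ b ∈ (Finset.range (2 * m + 1)).erase m, (X - C γ) ^ b) :=
        Finset.prod_mul_distrib.symm
    _ = ∏ γ : K, (((X - C γ) ^ m - 1) * ((X - C γ) ^ (m + 1) + 1)) :=
        Finset.prod_congr rfl fun γ _ => geom_aux _ m
    _ = (∏ γ : K, ((X - C γ) ^ m - 1)) * ∏ γ : K, ((X - C γ) ^ (m + 1) + 1) :=
        Finset.prod_mul_distrib
    _ = (∏ γ : K, (X - C γ)) ^ m * (∏ γ : K, (X - C γ)) ^ (m + 1) := by rw [h1, h2]
    _ = (∏ γ : K, (X - C γ)) * (∏ γ : K, (X - C γ)) ^ (2 * m) := by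
        rw [← pow_add, show m + (m + 1) = 2 * m + 1 by omega, pow_succ']

end BUPAux

theorem stmt18 (p : ℕ) [Fact p.Prime] (hp : Odd p) (m : ℕ) (hm : m ∈ OmegaSet p) :
    IsBUP ((X ^ (p ^ 2) - X : Polynomial (GaloisField p 2)) ^ (2 * m)) := by
  classical
  letI : Fintype (GaloisField p 2) := Fintype.ofFinite _
  have hpp : p.Prime := Fact.out
  have hp0 : p ≠ 0 := hpp.pos.ne'
  have hcard : Fintype.card (GaloisField p 2) = p ^ 2 := by
    rw [← Nat.card_eq_fintype_card]; exact GaloisField.card p 2 two_ne_zero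
  have hq1 : Fintype.card (GaloisField p 2) - 1 = p ^ 2 - 1 := by rw [hcard]
  have hLX : (∏ γ : GaloisField p 2, (X - C γ)) = X ^ (p ^ 2) - X := by
    rw [BUPAux.prod_eq, hcard]
  rw [IsBUP, ← hLX]
  have hpodd : ¬ (2 ∣ p) := by rcases hp with ⟨k, hk⟩; omega
  rcases hm with ((h1 | h2) | h3) | h4
  · -- Ω₁
    obtain ⟨hm0, hd1, hd2⟩ := h1
    exact BUPAux.bup_of_prods m (by omega)
      (BUPAux.B1 m (by omega) (by rw [hq1]; exact hd1))
      (BUPAux.B2 (m + 1) (by omega)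
        (by rw [hq1, show 2 * (m + 1) = 2 * m + 2 from by ring]; exact hd2))
  · -- Ω₂
    obtain ⟨N, hN0, rfl, hd1, hd2⟩ := h2
    have hB := BUPAux.B1 N (by omega) (by rw [hq1]; exact hd1)
    have hfr : ∏ γ : GaloisField p 2, ((X - C γ) ^ (p * N) - 1)
        = (∏ γ : GaloisField p 2, (X - C γ)) ^ (p * N) := by
      have he : ∀ y : Polynomial (GaloisField p 2), y ^ (p * N) - 1 = (y ^ N - 1) ^ p := by
        intro y
        rw [sub_pow_char, one_pow, ← pow_mul, mul_comm N p]
      calc ∏ γ : GaloisField p 2, ((X - C γ) ^ (p * N) - 1)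
          = ∏ γ : GaloisField p 2, ((X - C γ) ^ N - 1) ^ p :=
            Finset.prod_congr rfl fun γ _ => he _
        _ = (∏ γ : GaloisField p 2, ((X - C γ) ^ N - 1)) ^ p := Finset.prod_pow _ _ _
        _ = ((∏ γ : GaloisField p 2, (X - C γ)) ^ N) ^ p := by rw [hB]
        _ = (∏ γ : GaloisField p 2, (X - C γ)) ^ (p * N) := by
            rw [← pow_mul, mul_comm N p]
    exact BUPAux.bup_of_prods (p * N) (Nat.mul_ne_zero hp0 (by omega)) hfr
      (BUPAux.B2 (p * N + 1) (by omega)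
        (by rw [hq1, show 2 * (p * N + 1) = 2 * p * N + 2 from by ring]; exact hd2))
  · -- Ω₃
    obtain ⟨hm0, hd1, M, hdM, hMp⟩ := h3
    have h2M : 2 ∣ M := by
      have hdvd2 : 2 ∣ M * p := ⟨m + 1, by omega⟩
      rcases (Nat.Prime.dvd_mul Nat.prime_two).mp hdvd2 with h | h
      · exact h
      · exact absurd h hpodd
    obtain ⟨M', rfl⟩ := h2M
    have hm1 : m + 1 = M' * p := by
      have h' : 2 * (m + 1) = 2 * (M' * p) := by
        calc 2 * (m + 1) = 2 * m + 2 := by ring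
          _ = 2 * M' * p := hMp
          _ = 2 * (M' * p) := by ring
      exact Nat.eq_of_mul_eq_mul_left two_pos h'
    have hM'0 : M' ≠ 0 := by rintro rfl; rw [zero_mul] at hm1; omega
    have hB := BUPAux.B2 M' hM'0 (by rw [hq1]; exact hdM)
    have hfr : ∏ γ : GaloisField p 2, ((X - C γ) ^ (m + 1) + 1)
        = (∏ γ : GaloisField p 2, (X - C γ)) ^ (m + 1) := by
      have he : ∀ y : Polynomial (GaloisField p 2), y ^ (m + 1) + 1 = (y ^ M' + 1) ^ p := by
        intro y
        rw [add_pow_char, one_pow, ← pow_mul, ← hm1]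
      calc ∏ γ : GaloisField p 2, ((X - C γ) ^ (m + 1) + 1)
          = ∏ γ : GaloisField p 2, ((X - C γ) ^ M' + 1) ^ p :=
            Finset.prod_congr rfl fun γ _ => he _
        _ = (∏ γ : GaloisField p 2, ((X - C γ) ^ M' + 1)) ^ p := Finset.prod_pow _ _ _
        _ = ((∏ γ : GaloisField p 2, (X - C γ)) ^ M') ^ p := by rw [hB]
        _ = (∏ γ : GaloisField p 2, (X - C γ)) ^ (m + 1) := by rw [← pow_mul, ← hm1]
    exact BUPAux.bup_of_prods m (by omega)
      (BUPAux.B1 m (by omega) (by rw [hq1]; exact hd1)) hfr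
  · -- Ω₄
    obtain ⟨hm0, hd1, M, hdM, hMp⟩ := h4
    have h2M : 2 ∣ M := by
      have hdvd2 : 2 ∣ M * p ^ 2 := ⟨m + 1, by omega⟩
      rcases (Nat.Prime.dvd_mul Nat.prime_two).mp hdvd2 with h | h
      · exact h
      · rcases (Nat.Prime.dvd_mul Nat.prime_two).mp (by simpa [sq] using h) with h' | h' <;>
          exact absurd h' hpodd
    obtain ⟨M', rfl⟩ := h2M
    have hm1 : m + 1 = M' * p ^ 2 := by
      have h' : 2 * (m + 1) = 2 * (M' * p ^ 2) := by
        calc 2 * (m + 1) = 2 * m + 2 := by ring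
          _ = 2 * M' * p ^ 2 := hMp
          _ = 2 * (M' * p ^ 2) := by ring
      exact Nat.eq_of_mul_eq_mul_left two_pos h'
    have hM'0 : M' ≠ 0 := by rintro rfl; rw [zero_mul] at hm1; omega
    have hB := BUPAux.B2 M' hM'0 (by rw [hq1]; exact hdM)
    have hfr : ∏ γ : GaloisField p 2, ((X - C γ) ^ (m + 1) + 1)
        = (∏ γ : GaloisField p 2, (X - C γ)) ^ (m + 1) := by
      have he : ∀ y : Polynomial (GaloisField p 2), y ^ (m + 1) + 1 = (y ^ M' + 1) ^ p ^ 2 := by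
        intro y
        rw [add_pow_char_pow, one_pow, ← pow_mul, ← hm1]
      calc ∏ γ : GaloisField p 2, ((X - C γ) ^ (m + 1) + 1)
          = ∏ γ : GaloisField p 2, ((X - C γ) ^ M' + 1) ^ p ^ 2 :=
            Finset.prod_congr rfl fun γ _ => he _
        _ = (∏ γ : GaloisField p 2, ((X - C γ) ^ M' + 1)) ^ p ^ 2 := Finset.prod_pow _ _ _
        _ = ((∏ γ : GaloisField p 2, (X - C γ)) ^ M') ^ p ^ 2 := by rw [hB]
        _ = (∏ γ : GaloisField p 2, (X - C γ)) ^ (m + 1) := by rw [← pow_mul, ← hm1]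
    exact BUPAux.bup_of_prods m (by omega)
      (BUPAux.B1 m (by omega) (by rw [hq1]; exact hd1)) hfr
end
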